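/- arXiv:0811.1457 — 2 statements merged into one kernel-verified Lean document; each statement's English description precedes it below -/
import Mathlib

section
/- Let H and K be complex Hilbert spaces and f : H → K a continuous linear map. Then there exist complex Hilbert spaces I and J and continuous linear maps e : H → I, b : I → J, m : J → K such that e ∘ (adjoint e) = id (a †-epi/coisometry), b is injective with dense range, (adjoint m) ∘ m = id (a †-mono/isometry), and f = m ∘ b ∘ e. -/
/-- Generalised polar decomposition: every continuous linear map between complex Hilbert
spaces factors as a †-epi (coisometry), followed by a monic epimorphism (injective map with
dense range), followed by a †-mono (isometry). -/
theorem exists_dagger_epi_monicEpi_dagger_mono_factorisation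
    {H K : Type} [NormedAddCommGroup H] [InnerProductSpace ℂ H] [CompleteSpace H]
    [NormedAddCommGroup K] [InnerProductSpace ℂ K] [CompleteSpace K]
    (f : H →L[ℂ] K) :
    ∃ (I : Type) (_ : NormedAddCommGroup I) (_ : InnerProductSpace ℂ I) (_ : CompleteSpace I)
      (J : Type) (_ : NormedAddCommGroup J) (_ : InnerProductSpace ℂ J) (_ : CompleteSpace J)
      (e : H →L[ℂ] I) (b : I →L[ℂ] J) (m : J →L[ℂ] K),
      e.comp (ContinuousLinearMap.adjoint e) = ContinuousLinearMap.id ℂ I ∧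
      Function.Injective b ∧ Dense (Set.range b) ∧
      (ContinuousLinearMap.adjoint m).comp m = ContinuousLinearMap.id ℂ J ∧
      f = m.comp (b.comp e) := by
  set I : Submodule ℂ H := (LinearMap.ker (f : H →ₗ[ℂ] K))ᗮ with hI
  set J : Submodule ℂ K := (LinearMap.range (f : H →ₗ[ℂ] K)).topologicalClosure with hJ
  haveI : CompleteSpace I := (Submodule.isClosed_orthogonal _).completeSpace_coe
  haveI : CompleteSpace J := (Submodule.isClosed_topologicalClosure _).completeSpace_coe
  haveI : CompleteSpace (LinearMap.ker (f : H →ₗ[ℂ] K)) :=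
    (ContinuousLinearMap.isClosed_ker f).completeSpace_coe
  -- key : f x = f (proj x)
  have key : ∀ x : H, f ((Submodule.orthogonalProjectionOnto I x : H)) = f x := by
    intro x
    have h1 : x - (Submodule.orthogonalProjectionOnto I x : H) ∈ Iᗮ :=
      Submodule.sub_starProjection_mem_orthogonal (K := I) x
    have h1' : x - (Submodule.orthogonalProjectionOnto I x : H) ∈ ((LinearMap.ker (f : H →ₗ[ℂ] K))ᗮ)ᗮ := h1
    rw [Submodule.orthogonal_orthogonal] at h1'
    have h2 : f (x - (Submodule.orthogonalProjectionOnto I x : H)) = 0 := h1'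
    rw [map_sub, sub_eq_zero] at h2
    exact h2.symm
  refine ⟨I, inferInstance, inferInstance, inferInstance,
    J, inferInstance, inferInstance, inferInstance,
    Submodule.orthogonalProjectionOnto I,
    (f.comp I.subtypeL).codRestrict J (fun x =>
      Submodule.le_topologicalClosure _ (LinearMap.mem_range_self _ _)),
    J.subtypeL, ?_, ?_, ?_, ?_, ?_⟩
  · rw [Submodule.adjoint_orthogonalProjection]
    ext x
    simp [Submodule.orthogonalProjectionOnto_mem_subspace_eq_self]
  · rw [injective_iff_map_eq_zero]
    intro x hx
    have hfx : f (x : H) = 0 := congrArg Subtype.val hx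
    have : (x : H) ∈ LinearMap.ker (f : H →ₗ[ℂ] K) ⊓ (LinearMap.ker (f : H →ₗ[ℂ] K))ᗮ :=
      ⟨hfx, x.2⟩
    rw [Submodule.inf_orthogonal_eq_bot, Submodule.mem_bot] at this
    exact Subtype.ext this
  · intro x
    rw [closure_subtype]
    have hx : (x : K) ∈ closure (Set.range f) := by
      show (x : K) ∈ closure (Set.range (f : H →ₗ[ℂ] K))
      rw [← LinearMap.coe_range (f : H →ₗ[ℂ] K), ← Submodule.topologicalClosure_coe]
      exact x.2
    refine closure_mono ?_ hx
    rintro y ⟨z, rfl⟩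
    exact ⟨_, ⟨Submodule.orthogonalProjectionOnto I z, rfl⟩, key z⟩
  · rw [Submodule.adjoint_subtypeL]
    ext x
    simp [Submodule.orthogonalProjectionOnto_mem_subspace_eq_self]
  · ext x
    exact (key x).symm
end

section
/- Let X, Y be complex Hilbert spaces and f : X → Y, g : Y → X continuous linear maps. Suppose that for all closed subspaces M of X and N of Y: N ⊆ (∃_f(M))ᗮ if and only if M ⊆ (∃_g(N))ᗮ. Then there exists a scalar c ∈ ℂ such that g = c • (adjoint f); moreover, if f ≠ 0 this scalar c is unique. -/
open scoped InnerProductSpace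

private lemma horthocl_aux {E : Type*} [NormedAddCommGroup E] [InnerProductSpace ℂ E]
    [CompleteSpace E] (K : Submodule ℂ E) : K.topologicalClosureᗮ = Kᗮ := by
  rw [← Submodule.orthogonal_orthogonal_eq_closure, Submodule.triorthogonal_eq_orthogonal]

/-- Converse of the adjunction theorem: if for all closed subspaces `M` of `X` and `N` of
`Y` we have `N ⊥ ∃_f(M)` iff `M ⊥ ∃_g(N)`, then `g` is a scalar multiple of the
Hilbert-space adjoint of `f`; the scalar is unique when `f ≠ 0`. -/
theorem smul_adjoint_of_perp_adjunction
    {X Y : Type*} [NormedAddCommGroup X] [InnerProductSpace ℂ X] [CompleteSpace X]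
    [NormedAddCommGroup Y] [InnerProductSpace ℂ Y] [CompleteSpace Y]
    (f : X →L[ℂ] Y) (g : Y →L[ℂ] X)
    (h : ∀ (M : Submodule ℂ X) (N : Submodule ℂ Y),
      IsClosed (M : Set X) → IsClosed (N : Set Y) →
      (N ≤ ((Submodule.map (f : X →ₗ[ℂ] Y) M).topologicalClosure)ᗮ ↔
        M ≤ ((Submodule.map (g : Y →ₗ[ℂ] X) N).topologicalClosure)ᗮ)) :
    (∃ c : ℂ, g = c • ContinuousLinearMap.adjoint f) ∧
    (f ≠ 0 → ∃! c : ℂ, g = c • ContinuousLinearMap.adjoint f) := by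
  classical
  set T := ContinuousLinearMap.adjoint f with hTdef
  -- key pointwise orthogonality equivalence
  have key : ∀ (x : X) (y : Y), ⟪T y, x⟫_ℂ = 0 ↔ ⟪g y, x⟫_ℂ = 0 := by
    intro x y
    have hM : IsClosed ((ℂ ∙ x : Submodule ℂ X) : Set X) :=
      (ℂ ∙ x).closed_of_finiteDimensional
    have hN : IsClosed ((ℂ ∙ y : Submodule ℂ Y) : Set Y) :=
      (ℂ ∙ y).closed_of_finiteDimensional
    have h1 := h (ℂ ∙ x) (ℂ ∙ y) hM hN
    have hmapf : Submodule.map (f : X →ₗ[ℂ] Y) (ℂ ∙ x) = ℂ ∙ (f x) := by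
      rw [Submodule.map_span, Set.image_singleton]; rfl
    have hmapg : Submodule.map (g : Y →ₗ[ℂ] X) (ℂ ∙ y) = ℂ ∙ (g y) := by
      rw [Submodule.map_span, Set.image_singleton]; rfl
    rw [hmapf, hmapg, Submodule.span_singleton_le_iff_mem, Submodule.span_singleton_le_iff_mem,
      horthocl_aux (E := Y) (ℂ ∙ (f x)), horthocl_aux (E := X) (ℂ ∙ (g y)), Submodule.mem_orthogonal_singleton_iff_inner_right,
      Submodule.mem_orthogonal_singleton_iff_inner_right] at h1
    have hadj : ⟪T y, x⟫_ℂ = 0 ↔ ⟪f x, y⟫_ℂ = 0 := by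
      rw [hTdef, ContinuousLinearMap.adjoint_inner_left]
      exact inner_eq_zero_symm
    rw [hadj, h1]
  -- pointwise: g y is a scalar multiple of T y
  have hpt : ∀ y : Y, ∃ c : ℂ, g y = c • T y := by
    intro y
    have hle : (ℂ ∙ (T y))ᗮ ≤ (ℂ ∙ (g y))ᗮ := by
      intro x hx
      rw [Submodule.mem_orthogonal_singleton_iff_inner_left] at hx ⊢
      have := (key x y)
      rw [← inner_conj_symm (T y) x, ← inner_conj_symm (g y) x] at this
      simp only [map_eq_zero] at this
      exact this.mp hx
    have hmem : g y ∈ (ℂ ∙ (T y)) := by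
      have h2 : (ℂ ∙ (g y)) ≤ (ℂ ∙ (g y))ᗮᗮ := Submodule.le_orthogonal_orthogonal _
      have h3 : (ℂ ∙ (g y))ᗮᗮ ≤ (ℂ ∙ (T y))ᗮᗮ := Submodule.orthogonal_le hle
      have h4 : (ℂ ∙ (T y))ᗮᗮ = (ℂ ∙ (T y)) := Submodule.orthogonal_orthogonal _
      exact h4 ▸ (h3 (h2 (Submodule.mem_span_singleton_self _)))
    obtain ⟨c, hc⟩ := Submodule.mem_span_singleton.mp hmem
    exact ⟨c, hc.symm⟩
  by_cases hf : f = 0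
  · have hT0 : T = 0 := by rw [hTdef, hf]; simp
    have hg0 : g = 0 := by
      ext y
      obtain ⟨c, hc⟩ := hpt y
      simp [hc, hT0]
    refine ⟨⟨0, by simp [hg0]⟩, fun h0 => absurd hf h0⟩
  · -- T ≠ 0
    have hTne : T ≠ 0 := by
      intro hT0
      apply hf
      have : ContinuousLinearMap.adjoint T = 0 := by rw [hT0]; simp
      rwa [hTdef, ContinuousLinearMap.adjoint_adjoint] at this
    obtain ⟨y₀, hy₀⟩ : ∃ y₀, T y₀ ≠ 0 := by
      by_contra hc
      push_neg at hc
      exact hTne (by ext y; simp [hc y])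
    obtain ⟨c, hc⟩ := hpt y₀
    have hzero : ∀ y, T y = 0 → g y = 0 := by
      intro y hy
      obtain ⟨a, ha⟩ := hpt y
      simp [ha, hy]
    have hall : ∀ y, g y = c • T y := by
      intro y
      by_cases hdep : ∃ t : ℂ, T y = t • T y₀
      · obtain ⟨t, ht⟩ := hdep
        have h0 : T (y - t • y₀) = 0 := by simp [ht]
        have hg : g (y - t • y₀) = 0 := hzero _ h0
        have : g y = t • g y₀ := by
          have := hg
          rw [map_sub, map_smul, sub_eq_zero] at this
          exact this
        rw [this, hc, ht, smul_smul, smul_smul, mul_comm]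
      · obtain ⟨a, ha⟩ := hpt y
        obtain ⟨c', hc'⟩ := hpt (y + y₀)
        have heq : a • T y + c • T y₀ = c' • T y + c' • T y₀ := by
          have : g (y + y₀) = g y + g y₀ := map_add _ _ _
          rw [hc', ha, hc, map_add, smul_add] at this
          exact this.symm
        have hac : a = c' := by
          by_contra hne
          apply hdep
          have : (a - c') • T y = (c' - c) • T y₀ := by
            linear_combination (norm := module) heq
          refine ⟨(c' - c) / (a - c'), ?_⟩
          have hsub : a - c' ≠ 0 := sub_ne_zero.mpr hne
          rw [div_eq_mul_inv, mul_comm, mul_smul, ← this, smul_smul,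
            inv_mul_cancel₀ hsub, one_smul]
        have hcc : c' = c := by
          have h5 : (c' - c) • T y₀ = 0 := by
            rw [hac] at heq
            linear_combination (norm := module) -heq
          have := smul_eq_zero.mp h5
          rcases this with h6 | h6
          · exact sub_eq_zero.mp h6
          · exact absurd h6 hy₀
        rw [ha, hac, hcc]
    have hgeq : g = c • T := by
      ext y
      simp [hall y]
    refine ⟨⟨c, hgeq⟩, fun _ => ⟨c, hgeq, fun c' hc' => ?_⟩⟩
    have : c' • T y₀ = c • T y₀ := by
      have e : (c' • T) y₀ = (c • T) y₀ := by rw [← hc', hgeq]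
      exact e
    exact smul_left_injective ℂ hy₀ this
end
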